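/- Let n ≥ 2, let g be a linear isometry of ℝ^n (an element of the orthogonal group O(n)) and let a ∈ ℝ^n. Then for every nonnegative measurable function f defined on pairs (v,p) with v ∈ S^{n−1} and p ∈ v^⊥, one has ∫_{S^{n−1}} ∫_{v^⊥} f( g·v , g·p + a − ⟨a, g·v⟩·(g·v) ) dH^{n−1}(p) dσ(v) = ∫_{S^{n−1}} ∫_{v^⊥} f(v,p) dH^{n−1}(p) dσ(v). In other words, kinematic measure on the space of oriented lines is invariant under the action of every Euclidean motion x ↦ g·x + a. -/

import Mathlib

open MeasureTheory Metric Set Filter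
open scoped ENNReal RealInnerProductSpace Topology

/-- **Invariance of kinematic measure under Euclidean motions.** Let `g` be a linear isometry of
`ℝⁿ` and `a ∈ ℝⁿ`. The Euclidean motion `x ↦ g x + a` sends the oriented line `(v,p)` (with `v` in
the unit sphere and `p ∈ v^⊥`) to the line `(g v, g p + a - ⟨a, g v⟩ (g v))`. For every
nonnegative measurable function `f` of lines, the kinematic integral of `f` composed with this
action equals the kinematic integral of `f`. -/
theorem kinematic_measure_invariant (n : ℕ) (hn : 2 ≤ n)
    (g : EuclideanSpace ℝ (Fin n) ≃ₗᵢ[ℝ] EuclideanSpace ℝ (Fin n))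
    (a : EuclideanSpace ℝ (Fin n))
    (f : EuclideanSpace ℝ (Fin n) × EuclideanSpace ℝ (Fin n) → ℝ≥0∞) (hf : Measurable f) :
    (∫⁻ v in sphere (0 : EuclideanSpace ℝ (Fin n)) 1,
        ∫⁻ p in {p : EuclideanSpace ℝ (Fin n) | ⟪p, v⟫ = 0},
          f (g v, g p + a - ⟪a, g v⟫ • (g v)) ∂(μH[(n : ℝ) - 1]) ∂(μH[(n : ℝ) - 1])) =
      ∫⁻ v in sphere (0 : EuclideanSpace ℝ (Fin n)) 1,
        ∫⁻ p in {p : EuclideanSpace ℝ (Fin n) | ⟪p, v⟫ = 0},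
          f (v, p) ∂(μH[(n : ℝ) - 1]) ∂(μH[(n : ℝ) - 1]) := by
  -- Step 1: for `v` on the sphere, change variables `p ↦ g p + (a - ⟪a, g v⟫ • g v)`
  -- in the inner integral.
  have step1 : ∀ v ∈ sphere (0 : EuclideanSpace ℝ (Fin n)) 1,
      (∫⁻ p in {p : EuclideanSpace ℝ (Fin n) | ⟪p, v⟫ = 0}, f (g v, g p + a - ⟪a, g v⟫ • (g v)) ∂(μH[(n : ℝ) - 1]))
        = ∫⁻ p in {p : EuclideanSpace ℝ (Fin n) | ⟪p, g v⟫ = 0}, f (g v, p) ∂(μH[(n : ℝ) - 1]) := by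
    intro v hv
    have hgv : ‖g v‖ = 1 := by
      rw [g.norm_map]; simpa using (mem_sphere_zero_iff_norm).mp hv
    set w : EuclideanSpace ℝ (Fin n) := a - ⟪a, g v⟫ • (g v) with hw
    set φ : EuclideanSpace ℝ (Fin n) ≃ᵢ EuclideanSpace ℝ (Fin n) := g.toIsometryEquiv.trans (IsometryEquiv.addLeft w) with hφ
    have hφ_apply : ∀ p, φ p = g p + a - ⟪a, g v⟫ • (g v) := by
      intro p
      simp only [hφ, IsometryEquiv.trans_apply, IsometryEquiv.addLeft_apply,
        LinearIsometryEquiv.coe_toIsometryEquiv, hw]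
      abel
    have hmp : MeasurePreserving φ (μH[(n : ℝ) - 1] : Measure (EuclideanSpace ℝ (Fin n))) μH[(n : ℝ) - 1] :=
      φ.measurePreserving_hausdorffMeasure ((n : ℝ) - 1)
    have hemb : MeasurableEmbedding φ := φ.toHomeomorph.measurableEmbedding
    have hpre : φ ⁻¹' {p : EuclideanSpace ℝ (Fin n) | ⟪p, g v⟫ = 0} = {p : EuclideanSpace ℝ (Fin n) | ⟪p, v⟫ = 0} := by
      ext p
      have h1 : ⟪g p, g v⟫ = ⟪p, v⟫ := g.inner_map_map p v
      have h2 : ⟪g v, g v⟫ = (1 : ℝ) := by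
        rw [real_inner_self_eq_norm_sq, hgv]; norm_num
      simp only [mem_preimage, mem_setOf_eq, hφ_apply, sub_eq_add_neg,
        inner_add_left, inner_neg_left, real_inner_smul_left]
      rw [h1, h2]
      constructor <;> intro h <;> nlinarith [h]
    have hmeas : MeasurableSet {p : EuclideanSpace ℝ (Fin n) | ⟪p, v⟫ = 0} :=
      (isClosed_eq (continuous_id.inner continuous_const) continuous_const).measurableSet
    calc (∫⁻ p in {p : EuclideanSpace ℝ (Fin n) | ⟪p, v⟫ = 0}, f (g v, g p + a - ⟪a, g v⟫ • (g v)) ∂(μH[(n : ℝ) - 1]))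
        = ∫⁻ p in φ ⁻¹' {p : EuclideanSpace ℝ (Fin n) | ⟪p, g v⟫ = 0}, (fun q => f (g v, q)) (φ p) ∂(μH[(n : ℝ) - 1]) := by
          rw [hpre]
          exact setLIntegral_congr_fun hmeas
            (fun p _ => by simp only [hφ_apply p])
      _ = ∫⁻ p in {p : EuclideanSpace ℝ (Fin n) | ⟪p, g v⟫ = 0}, f (g v, p) ∂(μH[(n : ℝ) - 1]) :=
          hmp.setLIntegral_comp_preimage_emb hemb (fun q => f (g v, q)) _
  -- Step 2: change variables `v ↦ g v` in the outer integral.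
  have hsphere_meas : MeasurableSet (sphere (0 : EuclideanSpace ℝ (Fin n)) 1) :=
    (isClosed_sphere).measurableSet
  refine Eq.trans (setLIntegral_congr_fun hsphere_meas
    step1) ?_
  have hmpg : MeasurePreserving g.toIsometryEquiv (μH[(n : ℝ) - 1] : Measure (EuclideanSpace ℝ (Fin n))) μH[(n : ℝ) - 1] :=
    g.toIsometryEquiv.measurePreserving_hausdorffMeasure ((n : ℝ) - 1)
  have hembg : MeasurableEmbedding g.toIsometryEquiv :=
    g.toIsometryEquiv.toHomeomorph.measurableEmbedding
  have hpre : (g.toIsometryEquiv) ⁻¹' (sphere (0 : EuclideanSpace ℝ (Fin n)) 1) = sphere (0 : EuclideanSpace ℝ (Fin n)) 1 := by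
    ext v
    simp [mem_sphere_zero_iff_norm, g.norm_map]
  calc (∫⁻ v in sphere (0 : EuclideanSpace ℝ (Fin n)) 1,
        ∫⁻ p in {p : EuclideanSpace ℝ (Fin n) | ⟪p, g v⟫ = 0}, f (g v, p) ∂(μH[(n : ℝ) - 1]) ∂(μH[(n : ℝ) - 1]))
      = ∫⁻ v in (g.toIsometryEquiv) ⁻¹' (sphere (0 : EuclideanSpace ℝ (Fin n)) 1),
        (fun u => ∫⁻ p in {p : EuclideanSpace ℝ (Fin n) | ⟪p, u⟫ = 0}, f (u, p) ∂(μH[(n : ℝ) - 1]))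
          (g.toIsometryEquiv v) ∂(μH[(n : ℝ) - 1]) := by rw [hpre]; rfl
    _ = ∫⁻ v in sphere (0 : EuclideanSpace ℝ (Fin n)) 1,
        ∫⁻ p in {p : EuclideanSpace ℝ (Fin n) | ⟪p, v⟫ = 0}, f (v, p) ∂(μH[(n : ℝ) - 1]) ∂(μH[(n : ℝ) - 1]) :=
          hmpg.setLIntegral_comp_preimage_emb hembg
            (fun u => ∫⁻ p in {p : EuclideanSpace ℝ (Fin n) | ⟪p, u⟫ = 0}, f (u, p) ∂(μH[(n : ℝ) - 1])) _
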